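/- For n ≥ 1, (-1)^n Bl_n(x|λ)/n! = ∑_{m=1}^{n} C(n-1, m-1) B̂l_m(-x|λ)/m!, where C denotes binomial coefficients, Bl_n are Boole polynomials and B̂l_m are Boole polynomials of the second kind. -/

import Mathlib

open Finset PowerSeries

/-- Stirling numbers of the second kind. -/
def stirling2 : ℕ → ℕ → ℕ
  | 0, 0 => 1
  | 0, _ + 1 => 0
  | _ + 1, 0 => 0
  | n + 1, k + 1 => (k + 1) * stirling2 n (k + 1) + stirling2 n k

/-- Unsigned Stirling numbers of the first kind. -/
def stirling1 : ℕ → ℕ → ℕ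
  | 0, 0 => 1
  | 0, _ + 1 => 0
  | _ + 1, 0 => 0
  | n + 1, k + 1 => n * stirling1 n (k + 1) + stirling1 n k

/-- Signed Stirling numbers of the first kind. -/
def s1 (n l : ℕ) : ℚ := (-1) ^ (n - l) * (stirling1 n l : ℚ)

/-- The exponential generating function `∑ a n * t^n / n!` as a power series over `ℚ`. -/
noncomputable def egf (a : ℕ → ℚ) : PowerSeries ℚ :=
  PowerSeries.mk fun n => a n / (Nat.factorial n : ℚ)

/-- The binomial series `(1+t)^x = ∑ (x)_n t^n / n!` for `x : ℚ`. -/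
noncomputable def onePlusTPow (x : ℚ) : PowerSeries ℚ :=
  egf fun n => ∏ i ∈ Finset.range n, (x - i)

/-- `e^{xt}` as a power series over `ℚ`. -/
noncomputable def expXT (x : ℚ) : PowerSeries ℚ := egf fun n => x ^ n

namespace BooleAux

noncomputable def bin (y : ℚ) (n : ℕ) : ℚ :=
  (∏ i ∈ Finset.range n, (y - i)) / (Nat.factorial n : ℚ)

lemma factorial_ne (n : ℕ) : ((Nat.factorial n : ℚ)) ≠ 0 := by
  exact_mod_cast Nat.factorial_ne_zero n

lemma coeff_egf (a : ℕ → ℚ) (n : ℕ) :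
    PowerSeries.coeff n (egf a) = a n / (Nat.factorial n : ℚ) := by
  simp [egf]

lemma coeff_onePlusTPow (y : ℚ) (n : ℕ) :
    PowerSeries.coeff n (onePlusTPow y) = bin y n := by
  simp [onePlusTPow, egf, bin]

lemma pascal (y : ℚ) (n : ℕ) : bin (y + 1) (n + 1) = bin y (n + 1) + bin y n := by
  unfold bin
  rw [Finset.prod_range_succ' (fun i => y + 1 - (i : ℚ)), Finset.prod_range_succ (fun i => y - (i : ℚ))]
  have h1 := factorial_ne n
  have h2 := factorial_ne (n + 1)
  have hc : ∀ i ∈ Finset.range n, y + 1 - ((i + 1 : ℕ) : ℚ) = y - (i : ℚ) := by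
    intro i _; push_cast; ring
  rw [Finset.prod_congr rfl hc, Nat.factorial_succ]
  push_cast
  field_simp
  ring

lemma onePlusTPow_succ (y : ℚ) : onePlusTPow (y + 1) = onePlusTPow y * (1 + X) := by
  ext n
  rw [mul_add, mul_one, map_add]
  cases n with
  | zero =>
    simp [coeff_onePlusTPow, bin]
  | succ n =>
    rw [PowerSeries.coeff_succ_mul_X, coeff_onePlusTPow, coeff_onePlusTPow,
      coeff_onePlusTPow, pascal]

lemma onePlusTPow_zero : onePlusTPow 0 = 1 := by
  ext n
  cases n with
  | zero => simp [coeff_onePlusTPow, bin]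
  | succ n =>
    rw [coeff_onePlusTPow]
    simp only [bin, zero_sub]
    rw [Finset.prod_eq_zero (Finset.mem_range.mpr (Nat.succ_pos n)) (by simp)]
    simp

lemma onePlusTPow_nat (k : ℕ) : onePlusTPow (k : ℚ) = (1 + X) ^ k := by
  induction k with
  | zero => simpa using onePlusTPow_zero
  | succ k ih =>
    have : ((k + 1 : ℕ) : ℚ) = (k : ℚ) + 1 := by push_cast; ring
    rw [this, onePlusTPow_succ, ih, pow_succ]

lemma resc_one_add_X : rescale (-1 : ℚ) (1 + X) = 1 - X := by
  rw [map_add, map_one, rescale_neg_one_X, sub_eq_add_neg]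

noncomputable def Rz (y : ℚ) : PowerSeries ℚ := rescale (-1) (onePlusTPow y)

lemma coeff_Rz (y : ℚ) (n : ℕ) :
    PowerSeries.coeff n (Rz y) = (-1) ^ n * bin y n := by
  rw [Rz, coeff_rescale, coeff_onePlusTPow]

lemma Rz_zero : Rz 0 = 1 := by rw [Rz, onePlusTPow_zero, map_one]

lemma Rz_succ (y : ℚ) : Rz (y + 1) = Rz y * (1 - X) := by
  rw [Rz, onePlusTPow_succ, map_mul, resc_one_add_X, Rz]

lemma Rz_add_nat (k : ℕ) (y : ℚ) : Rz (y + k) = Rz y * (1 - X) ^ k := by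
  induction k with
  | zero => simp
  | succ k ih =>
    have h1 : y + ((k + 1 : ℕ) : ℚ) = (y + k) + 1 := by push_cast; ring
    rw [h1, Rz_succ, ih, pow_succ, mul_assoc]

lemma Rz_nat (k : ℕ) : Rz (k : ℚ) = (1 - X) ^ k := by
  have := Rz_add_nat k 0
  simpa [Rz_zero] using this

lemma vand (b : ℕ) : ∀ (a : ℚ) (k : ℕ),
    bin (a + b) k = ∑ j ∈ Finset.range (k + 1), bin a j * (b.choose (k - j) : ℚ) := by
  induction b with
  | zero =>
    intro a k
    rw [Finset.sum_eq_single k]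
    · simp [bin]
    · intro j hj hne
      have hj' : j < k := lt_of_le_of_ne (Nat.lt_succ_iff.mp (Finset.mem_range.mp hj)) hne
      rw [Nat.choose_eq_zero_of_lt (by omega)]
      simp
    · intro h; exact absurd (Finset.self_mem_range_succ k) h
  | succ b ih =>
    intro a k
    cases k with
    | zero => simp [bin]
    | succ k =>
      have key : bin (a + ((b : ℚ) + 1)) (k + 1) = bin (a + b) (k + 1) + bin (a + b) k := by
        rw [show a + ((b : ℚ) + 1) = (a + b) + 1 by ring, pascal]
      have hcast : ((b + 1 : ℕ) : ℚ) = (b : ℚ) + 1 := by push_cast; ring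
      rw [hcast, key, ih a (k + 1), ih a k, Finset.sum_range_succ (fun j => bin a j * ((b.choose (k + 1 - j) : ℕ) : ℚ))]
      rw [Finset.sum_range_succ (fun j => bin a j * (((b+1).choose (k + 1 - j) : ℕ) : ℚ))]
      have e1 : k + 1 - (k + 1) = 0 := by omega
      rw [e1]
      rw [Nat.choose_zero_right, Nat.choose_zero_right]
      rw [add_right_comm, ← Finset.sum_add_distrib]
      congr 1
      apply Finset.sum_congr rfl
      intro j hj
      have hjk : j ≤ k := Nat.lt_succ_iff.mp (Finset.mem_range.mp hj)
      have e2 : k + 1 - j = (k - j) + 1 := by omega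
      rw [e2, Nat.choose_succ_succ']
      push_cast
      ring


noncomputable def aS : PowerSeries ℚ := PowerSeries.mk fun n => if n = 0 then 0 else 1

noncomputable def uS : PowerSeries ℚ := PowerSeries.mk fun _ => (1 : ℚ)

lemma coeff_aS (n : ℕ) : PowerSeries.coeff n aS = if n = 0 then 0 else 1 := by
  simp [aS]

lemma aS_eq : aS = X * uS := by
  ext n
  cases n with
  | zero =>
    rw [PowerSeries.coeff_zero_eq_constantCoeff]
    simp [aS, uS]
  | succ n =>
    rw [PowerSeries.coeff_succ_X_mul]
    simp [aS, uS]

noncomputable def cc (n m : ℕ) : ℚ := PowerSeries.coeff n (aS ^ m)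

lemma cc_eq_zero {n m : ℕ} (h : n < m) : cc n m = 0 := by
  have hdvd : (X : PowerSeries ℚ) ^ m ∣ aS ^ m := pow_dvd_pow_of_dvd ⟨uS, aS_eq⟩ m
  exact PowerSeries.X_pow_dvd_iff.mp hdvd n h

lemma cc_zero_right (n : ℕ) : cc n 0 = if n = 0 then 1 else 0 := by
  simp [cc, PowerSeries.coeff_one]

lemma cc_rec (n m : ℕ) : cc n (m + 1) = ∑ k ∈ Finset.range n, cc k m := by
  unfold cc
  rw [pow_succ, PowerSeries.coeff_mul, Finset.Nat.sum_antidiagonal_eq_sum_range_succ_mk,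
    Finset.sum_range_succ]
  have h0 : PowerSeries.coeff (n - n) aS = 0 := by simp [coeff_aS]
  rw [h0, mul_zero, add_zero]
  apply Finset.sum_congr rfl
  intro k hk
  have : n - k ≠ 0 := by have := Finset.mem_range.mp hk; omega
  rw [coeff_aS, if_neg this, mul_one]

lemma hockey (m : ℕ) : ∀ n, ∑ j ∈ Finset.range n, Nat.choose j m = Nat.choose n (m + 1)
  | 0 => by simp
  | n + 1 => by
    rw [Finset.sum_range_succ, hockey m n, Nat.choose_succ_succ']
    omega

lemma cc_succ : ∀ (m n : ℕ), cc (n + 1) (m + 1) = (n.choose m : ℚ)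
  | 0, n => by
    rw [cc_rec]
    simp [cc_zero_right]
  | m + 1, n => by
    rw [cc_rec, Finset.sum_range_succ']
    rw [show cc 0 (m + 1) = 0 from cc_eq_zero (Nat.succ_pos m), add_zero]
    rw [Finset.sum_congr rfl (fun j _ => cc_succ m j)]
    rw [← Nat.cast_sum, hockey]

noncomputable def Ssub (f : PowerSeries ℚ) : PowerSeries ℚ :=
  PowerSeries.mk fun n => ∑ m ∈ Finset.range (n + 1), PowerSeries.coeff m f * cc n m

lemma coeff_Ssub (f : PowerSeries ℚ) (n : ℕ) :
    PowerSeries.coeff n (Ssub f) = ∑ m ∈ Finset.range (n + 1), PowerSeries.coeff m f * cc n m := by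
  simp [Ssub]

lemma coeff_Ssub_ext (f : PowerSeries ℚ) {k N : ℕ} (h : k ≤ N) :
    PowerSeries.coeff k (Ssub f) = ∑ m ∈ Finset.range (N + 1), PowerSeries.coeff m f * cc k m := by
  rw [coeff_Ssub]
  apply Finset.sum_subset
  · intro m hm
    simp only [Finset.mem_range] at hm ⊢
    omega
  · intro m hm hnm
    simp only [Finset.mem_range] at hm hnm
    rw [cc_eq_zero (by omega), mul_zero]

lemma Ssub_add (f g : PowerSeries ℚ) : Ssub (f + g) = Ssub f + Ssub g := by
  ext n
  simp [coeff_Ssub, add_mul, Finset.sum_add_distrib]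

lemma Ssub_one : Ssub 1 = 1 := by
  ext n
  rw [coeff_Ssub]
  simp only [PowerSeries.coeff_one, ite_mul, one_mul, zero_mul]
  rw [Finset.sum_ite_eq' (Finset.range (n + 1)) 0 (fun m => cc n m)]
  simp [cc_zero_right]

lemma Ssub_X : Ssub X = aS := by
  ext n
  rw [coeff_Ssub]
  simp only [PowerSeries.coeff_X, ite_mul, one_mul, zero_mul]
  rw [Finset.sum_ite_eq' (Finset.range (n + 1)) 1 (fun m => cc n m)]
  cases n with
  | zero => simp [coeff_aS]
  | succ n =>
    rw [if_pos (Finset.mem_range.mpr (by omega)), cc_succ, coeff_aS]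
    simp

lemma Ssub_mul (f g : PowerSeries ℚ) : Ssub (f * g) = Ssub f * Ssub g := by
  ext n
  have hbridge : ∀ i j : ℕ, cc n (i + j) = ∑ p ∈ Finset.HasAntidiagonal.antidiagonal n, cc p.1 i * cc p.2 j := by
    intro i j
    unfold cc
    rw [pow_add, PowerSeries.coeff_mul]
  have hdisj : (↑(Finset.range (n + 1)) : Set ℕ).PairwiseDisjoint Finset.HasAntidiagonal.antidiagonal := by
    intro m1 _ m2 _ hne
    apply Finset.disjoint_left.mpr
    intro p h1 h2
    exact hne ((Finset.HasAntidiagonal.mem_antidiagonal.mp h1).symm.trans (Finset.HasAntidiagonal.mem_antidiagonal.mp h2))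
  have hsub : (Finset.range (n + 1)).biUnion Finset.HasAntidiagonal.antidiagonal ⊆
      Finset.range (n + 1) ×ˢ Finset.range (n + 1) := by
    intro p hp
    obtain ⟨m, hm, hpm⟩ := Finset.mem_biUnion.mp hp
    have h1 := Finset.HasAntidiagonal.mem_antidiagonal.mp hpm
    have h2 := Finset.mem_range.mp hm
    exact Finset.mem_product.mpr ⟨Finset.mem_range.mpr (by omega), Finset.mem_range.mpr (by omega)⟩
  rw [coeff_Ssub, PowerSeries.coeff_mul]
  have hL : ∑ m ∈ Finset.range (n + 1), PowerSeries.coeff m (f * g) * cc n m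
      = ∑ p ∈ (Finset.range (n + 1)).biUnion Finset.HasAntidiagonal.antidiagonal,
          PowerSeries.coeff p.1 f * PowerSeries.coeff p.2 g * cc n (p.1 + p.2) := by
    rw [Finset.sum_biUnion hdisj]
    refine Finset.sum_congr rfl fun m _ => ?_
    rw [PowerSeries.coeff_mul, Finset.sum_mul]
    refine Finset.sum_congr rfl fun p hp => ?_
    rw [Finset.HasAntidiagonal.mem_antidiagonal.mp hp]
  have hext : ∑ p ∈ (Finset.range (n + 1)).biUnion Finset.HasAntidiagonal.antidiagonal,
          PowerSeries.coeff p.1 f * PowerSeries.coeff p.2 g * cc n (p.1 + p.2)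
      = ∑ p ∈ Finset.range (n + 1) ×ˢ Finset.range (n + 1),
          PowerSeries.coeff p.1 f * PowerSeries.coeff p.2 g * cc n (p.1 + p.2) := by
    apply Finset.sum_subset hsub
    intro p _ hnp
    have hgt : n < p.1 + p.2 := by
      by_contra hle
      push_neg at hle
      exact hnp (Finset.mem_biUnion.mpr ⟨p.1 + p.2, Finset.mem_range.mpr (by omega),
        Finset.HasAntidiagonal.mem_antidiagonal.mpr rfl⟩)
    rw [cc_eq_zero hgt, mul_zero]
  rw [hL, hext, Finset.sum_product]
  have hR : ∀ p ∈ Finset.HasAntidiagonal.antidiagonal n,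
      PowerSeries.coeff p.1 (Ssub f) * PowerSeries.coeff p.2 (Ssub g)
        = ∑ i ∈ Finset.range (n + 1), ∑ j ∈ Finset.range (n + 1),
            (PowerSeries.coeff i f * cc p.1 i) * (PowerSeries.coeff j g * cc p.2 j) := by
    intro p hp
    have h12 := Finset.HasAntidiagonal.mem_antidiagonal.mp hp
    rw [coeff_Ssub_ext f (show p.1 ≤ n by omega), coeff_Ssub_ext g (show p.2 ≤ n by omega),
      Finset.sum_mul_sum]
  have hR' : ∑ p ∈ Finset.HasAntidiagonal.antidiagonal n,
      PowerSeries.coeff p.1 (Ssub f) * PowerSeries.coeff p.2 (Ssub g)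
      = ∑ p ∈ Finset.HasAntidiagonal.antidiagonal n, ∑ i ∈ Finset.range (n + 1), ∑ j ∈ Finset.range (n + 1),
            (PowerSeries.coeff i f * cc p.1 i) * (PowerSeries.coeff j g * cc p.2 j) :=
    Finset.sum_congr rfl hR
  rw [hR',
    Finset.sum_comm (s := Finset.HasAntidiagonal.antidiagonal n) (t := Finset.range (n + 1))]
  refine Finset.sum_congr rfl fun i _ => ?_
  rw [Finset.sum_comm (s := Finset.HasAntidiagonal.antidiagonal n) (t := Finset.range (n + 1))]
  refine Finset.sum_congr rfl fun j _ => ?_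
  rw [hbridge i j, Finset.mul_sum]
  refine Finset.sum_congr rfl fun p _ => ?_
  ring

lemma Ssub_pow (f : PowerSeries ℚ) (k : ℕ) : Ssub (f ^ k) = (Ssub f) ^ k := by
  induction k with
  | zero => simpa using Ssub_one
  | succ k ih => rw [pow_succ, Ssub_mul, ih, pow_succ]

lemma one_add_aS_mul : ((1 : PowerSeries ℚ) + aS) * (1 - X) = 1 := by
  have h : ((1 : PowerSeries ℚ) + aS) * (1 - X) = 1 + aS - X - aS * X := by ring
  rw [h]
  ext n
  rw [map_sub, map_sub, map_add]
  rcases n with _ | _ | n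
  · rw [PowerSeries.coeff_zero_eq_constantCoeff]
    simp [aS]
  · rw [PowerSeries.coeff_succ_mul_X]
    simp [coeff_aS, PowerSeries.coeff_one, PowerSeries.coeff_X]
  · rw [PowerSeries.coeff_succ_mul_X]
    simp [coeff_aS, PowerSeries.coeff_one, PowerSeries.coeff_X]

lemma Ssub_onePlusTPow (y : ℚ) : Ssub (onePlusTPow y) = Rz (-y) := by
  ext n
  rw [coeff_Ssub, coeff_Rz]
  cases n with
  | zero =>
    simp [coeff_onePlusTPow, bin, cc]
  | succ n =>
    have h1 : ∀ m ∈ Finset.range (n + 2),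
        PowerSeries.coeff m (onePlusTPow y) * cc (n + 1) m
          = bin y m * ((n.choose (n + 1 - m) : ℕ) : ℚ) := by
      intro m hm
      rw [coeff_onePlusTPow]
      congr 1
      cases m with
      | zero =>
        rw [cc_zero_right, if_neg (Nat.succ_ne_zero n),
          Nat.choose_eq_zero_of_lt (by omega), Nat.cast_zero]
      | succ m =>
        rw [cc_succ]
        have hm' : m ≤ n := by have := Finset.mem_range.mp hm; omega
        rw [show n + 1 - (m + 1) = n - m from by omega, Nat.choose_symm hm']
    rw [Finset.sum_congr rfl h1, ← vand n y (n + 1)]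
    -- now : bin (y + n) (n+1) = (-1)^(n+1) * bin (-y) (n+1)
    unfold bin
    have hprod1 : ∏ i ∈ Finset.range (n + 1), (y + (n : ℚ) - i)
        = ∏ i ∈ Finset.range (n + 1), (y + (i : ℚ)) := by
      rw [← Finset.prod_range_reflect (fun j => y + (j : ℚ)) (n + 1)]
      apply Finset.prod_congr rfl
      intro i hi
      have hi' : i ≤ n := by have := Finset.mem_range.mp hi; omega
      rw [show n + 1 - 1 - i = n - i from by omega, Nat.cast_sub hi']
      ring
    have hprod2 : ∏ i ∈ Finset.range (n + 1), (-y - (i : ℚ))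
        = (-1) ^ (n + 1) * ∏ i ∈ Finset.range (n + 1), (y + (i : ℚ)) := by
      rw [show (((-1 : ℚ)) ^ (n + 1)) = ∏ _i ∈ Finset.range (n + 1), (-1 : ℚ) from by
        rw [Finset.prod_const, Finset.card_range], ← Finset.prod_mul_distrib]
      apply Finset.prod_congr rfl
      intro i _
      ring
    rw [hprod1, hprod2]
    rw [mul_div_assoc, ← mul_assoc, ← mul_pow]
    norm_num

lemma Ssub_oneAddX : Ssub (1 + X) = 1 + aS := by
  rw [Ssub_add, Ssub_one, Ssub_X]

lemma sum_Icc_one (n : ℕ) (f : ℕ → ℚ) :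
    ∑ m ∈ Finset.Icc 1 n, f m = ∑ i ∈ Finset.range n, f (i + 1) := by
  induction n with
  | zero => simp
  | succ n ih =>
    rw [Finset.sum_Icc_succ_top (by omega), ih, Finset.sum_range_succ]

end BooleAux

open BooleAux

theorem boole_boole2nd_reflection (L : ℕ) (hL : 0 < L) (x : ℚ) (Bl Bh : ℚ → ℕ → ℚ)
    (hBl : ∀ y : ℚ, egf (Bl y) * (1 + (1 + PowerSeries.X) ^ L) = onePlusTPow y)
    (hBh : ∀ y : ℚ, egf (Bh y) * (1 + (1 + PowerSeries.X) ^ L) = onePlusTPow ((L : ℚ) + y))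
    (n : ℕ) (hn : 1 ≤ n) :
    (-1) ^ n * Bl x n / (Nat.factorial n : ℚ) =
      ∑ m ∈ Finset.Icc 1 n,
        ((n - 1).choose (m - 1) : ℚ) * Bh (-x) m / (Nat.factorial m : ℚ) := by
  have hDne : (1 + (1 - X) ^ L : PowerSeries ℚ) ≠ 0 := by
    intro h
    have h2 := congrArg (PowerSeries.constantCoeff) h
    rw [map_add, map_one, map_pow, map_sub, map_one, PowerSeries.constantCoeff_X] at h2
    norm_num at h2
  have hG : rescale (-1) (egf (Bl x)) * (1 + (1 - X) ^ L) = Rz x := by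
    have h1 := congrArg (rescale (-1 : ℚ)) (hBl x)
    rwa [map_mul, map_add, map_one, map_pow, resc_one_add_X] at h1
  have hH : Ssub (egf (Bh (-x))) * (1 + (1 - X) ^ L) = Rz x := by
    have h2 := congrArg Ssub (hBh (-x))
    rw [Ssub_mul, Ssub_add, Ssub_one, Ssub_pow, Ssub_oneAddX, Ssub_onePlusTPow] at h2
    have h3 : Ssub (egf (Bh (-x))) * ((1 + (1 + aS) ^ L) * (1 - X) ^ L)
        = Rz (-((L : ℚ) + -x)) * (1 - X) ^ L := by
      rw [← mul_assoc, h2]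
    have hkey : ((1 : PowerSeries ℚ) + (1 + aS) ^ L) * (1 - X) ^ L = 1 + (1 - X) ^ L := by
      rw [add_mul, one_mul, ← mul_pow, one_add_aS_mul, one_pow, add_comm]
    have hR : Rz (-((L : ℚ) + -x)) * (1 - X) ^ L = Rz x := by
      rw [show (-((L : ℚ) + -x)) = x - L from by ring, ← Rz_add_nat L (x - L)]
      norm_num
    rw [hkey, hR] at h3
    exact h3
  have hGH : rescale (-1) (egf (Bl x)) = Ssub (egf (Bh (-x))) :=
    mul_right_cancel₀ hDne (hG.trans hH.symm)
  have hco := congrArg (PowerSeries.coeff n) hGH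
  rw [coeff_rescale, coeff_egf, coeff_Ssub] at hco
  obtain ⟨k, rfl⟩ : ∃ k, n = k + 1 := ⟨n - 1, by omega⟩
  rw [Finset.sum_range_succ'] at hco
  rw [coeff_egf, cc_zero_right, if_neg (Nat.succ_ne_zero k), mul_zero, add_zero] at hco
  rw [mul_div_assoc, hco, sum_Icc_one]
  apply Finset.sum_congr rfl
  intro i _
  rw [coeff_egf, cc_succ, Nat.add_sub_cancel, Nat.add_sub_cancel]
  ring
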